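/- The 11×11 matrix M11 (given explicitly, with zero diagonal and ±1 off-diagonal entries) has determinant 57122 = 2·13⁴. -/

import Mathlib

def M11 : Matrix (Fin 11) (Fin 11) ℤ :=
  !![0,1,-1,1,1,-1,1,-1,1,-1,-1;
     1,0,1,1,-1,1,-1,1,1,-1,-1;
     -1,1,0,1,1,1,-1,1,-1,-1,-1;
     1,1,1,0,1,1,1,-1,-1,-1,1;
     1,-1,1,1,0,1,1,-1,-1,1,-1;
     -1,1,1,1,1,0,1,1,1,1,1;
     1,-1,-1,1,1,1,0,1,1,1,1;
     -1,1,1,-1,-1,1,1,0,1,1,-1;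
     1,1,-1,-1,-1,1,1,1,0,-1,1;
     -1,-1,-1,-1,1,1,1,1,-1,0,-1;
     -1,-1,-1,1,-1,1,1,-1,1,-1,0]

/-- M11 with rows 0 and 1 swapped. -/
def Msw : Matrix (Fin 11) (Fin 11) ℤ :=
  !![1, 0, 1, 1, -1, 1, -1, 1, 1, -1, -1;
     0, 1, -1, 1, 1, -1, 1, -1, 1, -1, -1;
     -1, 1, 0, 1, 1, 1, -1, 1, -1, -1, -1;
     1, 1, 1, 0, 1, 1, 1, -1, -1, -1, 1;
     1, -1, 1, 1, 0, 1, 1, -1, -1, 1, -1;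
     -1, 1, 1, 1, 1, 0, 1, 1, 1, 1, 1;
     1, -1, -1, 1, 1, 1, 0, 1, 1, 1, 1;
     -1, 1, 1, -1, -1, 1, 1, 0, 1, 1, -1;
     1, 1, -1, -1, -1, 1, 1, 1, 0, -1, 1;
     -1, -1, -1, -1, 1, 1, 1, 1, -1, 0, -1;
     -1, -1, -1, 1, -1, 1, 1, -1, 1, -1, 0]

/-- Integer lower-triangular matrix (scaled inverse of the unit lower-triangular LU factor). -/
def A11 : Matrix (Fin 11) (Fin 11) ℤ :=
  !![1, 0, 0, 0, 0, 0, 0, 0, 0, 0, 0;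
     0, 1, 0, 0, 0, 0, 0, 0, 0, 0, 0;
     1, -1, 1, 0, 0, 0, 0, 0, 0, 0, 0;
     -3, -1, -1, 2, 0, 0, 0, 0, 0, 0, 0;
     -7, 1, 1, 3, 5, 0, 0, 0, 0, 0, 0;
     -1, 7, -17, -3, -1, 12, 0, 0, 0, 0, 0;
     19, -17, -25, -1, -39, 33, 29, 0, 0, 0, 0;
     61, -47, -103, -7, -129, 123, 113, 18, 0, 0, 0;
     -21, -19, 25, -9, 33, 9, -37, -39, 29, 0, 0;
     5, 3, -1, 1, -1, -1, -3, -1, -1, 4, 0;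
     -3, -5, -1, 3, -3, 3, 1, -3, 1, -3, 3]

/-- Integer upper-triangular matrix with A11 * Msw = B11. -/
def B11 : Matrix (Fin 11) (Fin 11) ℤ :=
  !![1, 0, 1, 1, -1, 1, -1, 1, 1, -1, -1;
     0, 1, -1, 1, 1, -1, 1, -1, 1, -1, -1;
     0, 0, 2, 1, -1, 3, -3, 3, -1, -1, -1;
     0, 0, 0, -5, 3, -1, 5, -5, -5, 3, 7;
     0, 0, 0, 0, 12, 1, 15, -15, -15, 7, 3;
     0, 0, 0, 0, 0, -29, 33, -9, 39, 25, 21;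
     0, 0, 0, 0, 0, 0, -18, 113, 129, 47, 123;
     0, 0, 0, 0, 0, 0, 0, 377, 507, 221, 429;
     0, 0, 0, 0, 0, 0, 0, 0, -156, -39, 13;
     0, 0, 0, 0, 0, 0, 0, 0, 0, -13, -13;
     0, 0, 0, 0, 0, 0, 0, 0, 0, 0, 26]

set_option maxRecDepth 10000 in
lemma A11_lower : A11.BlockTriangular (OrderDual.toDual) :=
  show ∀ i j : Fin 11, i < j → Matrix.of.symm A11 i j = 0 by decide

set_option maxRecDepth 10000 in
lemma B11_upper : B11.BlockTriangular id :=
  show ∀ i j : Fin 11, id j < id i → Matrix.of.symm B11 i j = 0 by decide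

set_option maxRecDepth 10000 in
lemma A11_det : A11.det = 21798720 := by
  rw [Matrix.det_of_lowerTriangular A11 A11_lower]
  norm_num [A11, Fin.prod_univ_succ]

set_option maxRecDepth 10000 in
lemma B11_det : B11.det = -1245186483840 := by
  rw [Matrix.det_of_upperTriangular B11_upper]
  norm_num [B11, Fin.prod_univ_succ]

set_option maxRecDepth 100000 in
lemma mul_eq : A11 * Msw = B11 := by
  decide

set_option maxRecDepth 100000 in
lemma swap_eq : M11.submatrix (Equiv.swap 0 1) id = Msw := by
  decide

lemma Msw_det : Msw.det = -57122 := by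
  have h : A11.det * Msw.det = B11.det :=
    (Matrix.det_mul A11 Msw).symm.trans (congrArg Matrix.det mul_eq)
  rw [A11_det, B11_det] at h
  have h2 : (21798720 : ℤ) * Msw.det = 21798720 * (-57122) := by rw [h]; norm_num
  exact mul_left_cancel₀ (by norm_num) h2

theorem M11_det : M11.det = 57122 ∧ (57122 : ℤ) = 2 * 13 ^ 4 := by
  refine ⟨?_, by norm_num⟩
  have h := Matrix.det_permute (Equiv.swap (0 : Fin 11) 1) M11
  have hs : Equiv.Perm.sign (Equiv.swap (0 : Fin 11) 1) = -1 := Equiv.Perm.sign_swap (by decide)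
  rw [swap_eq, Msw_det, hs] at h
  simpa using h.symm
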